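/- Let IA* denote the set of infinite interlacing integer arrays (x_i^{(j)})_{0≤i≤j, j≥0} such that for each column i there exists j_i with x_i^{(n)} = i for all n ≥ j_i. For such a configuration define h_i(j) = #{n ≥ i : x_i^{(n)} > j} and the map Hgt sending (x_i^{(j)}) to (h_i(j) + i)_{0≤i≤j}. Then Hgt maps IA* to IA* and is an involution: Hgt ∘ Hgt = id on IA*. -/

import Mathlib

/-- `x` is an infinite interlacing array: level `n` carries `n + 1` particles
`x n 0 < x n 1 < ⋯ < x n n` (strict monotonicity follows from interlacing) and
consecutive levels interlace: `x_{i}^{(n+1)} ≤ x_i^{(n)} < x_{i+1}^{(n+1)}`. -/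
def InterlacingProp (x : (n : ℕ) → Fin (n + 1) → ℕ) : Prop :=
  ∀ (n : ℕ) (i : Fin (n + 1)), x (n + 1) i.castSucc ≤ x n i ∧ x n i < x (n + 1) i.succ

/-- `x ∈ IA*`: every column eventually equals its minimal value `i`. -/
def IAStarProp (x : (n : ℕ) → Fin (n + 1) → ℕ) : Prop :=
  ∀ i : ℕ, ∃ J : ℕ, ∀ (n : ℕ) (h : i ≤ n), J ≤ n → x n ⟨i, Nat.lt_succ_of_le h⟩ = i

/-- The height-function map `Hgt`, sending `(x_i^{(j)})` to `(h_i(j) + i)` where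
`h_i(j) = #{n ≥ i : x_i^{(n)} > j}`. -/
noncomputable def heightMap (x : (n : ℕ) → Fin (n + 1) → ℕ) : (n : ℕ) → Fin (n + 1) → ℕ :=
  fun n i =>
    Set.ncard {m : ℕ | ∃ h : (i : ℕ) ≤ m, n < x m ⟨(i : ℕ), Nat.lt_succ_of_le h⟩} + (i : ℕ)

namespace Stmt14Aux

/-- The (shifted) column set: `{k | x_i^{(i+k)} > n}`. -/
def colSet (x : (n : ℕ) → Fin (n + 1) → ℕ) (i n : ℕ) : Set ℕ :=
  {k : ℕ | n < x (i + k) ⟨i, Nat.lt_succ_of_le (Nat.le_add_right i k)⟩}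

lemma x_eq (x : (n : ℕ) → Fin (n + 1) → ℕ) {m m' i : ℕ} (h : m = m')
    {p : i < m + 1} {p' : i < m' + 1} : x m ⟨i, p⟩ = x m' ⟨i, p'⟩ := by
  subst h; rfl

lemma ncard_Iio (n : ℕ) : (Set.Iio n).ncard = n := by
  have : (Set.Iio n : Set ℕ) = ↑(Finset.range n) := by ext m; simp
  rw [this, Set.ncard_coe_finset, Finset.card_range]

/-- A finite lower set of naturals is an initial segment of length its cardinality. -/
lemma lowerSet_eq_Iio (S : Set ℕ) (hfin : S.Finite)
    (hlow : ∀ ⦃m⦄, m ∈ S → ∀ ⦃k⦄, k ≤ m → k ∈ S) : S = Set.Iio S.ncard := by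
  have hcne : Sᶜ.Nonempty := (hfin.infinite_compl).nonempty
  have hmem : sInf Sᶜ ∈ Sᶜ := Nat.sInf_mem hcne
  have hS : S = Set.Iio (sInf Sᶜ) := by
    ext m
    constructor
    · intro hm
      by_contra hnm
      exact hmem (hlow hm (Nat.not_lt.mp hnm))
    · intro hm
      by_contra hnm
      exact absurd (Nat.sInf_le hnm) (Nat.not_le.mpr hm)
  rw [hS, ncard_Iio]

variable (x : (n : ℕ) → Fin (n + 1) → ℕ)

/-- Columns are antitone. -/
lemma col_anti (hint : InterlacingProp x) {i m n : ℕ} (him : i ≤ m) (hmn : m ≤ n) :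
    x n ⟨i, Nat.lt_succ_of_le (him.trans hmn)⟩ ≤ x m ⟨i, Nat.lt_succ_of_le him⟩ := by
  induction n, hmn using Nat.le_induction with
  | base => exact le_rfl
  | succ n hmn ih =>
    have h1 := (hint n ⟨i, Nat.lt_succ_of_le (him.trans hmn)⟩).1
    simp only [Fin.castSucc_mk] at h1
    exact h1.trans ih

/-- Column `i` is bounded below by `i`. -/
lemma col_ge (hint : InterlacingProp x) : ∀ (i n : ℕ) (h : i ≤ n),
    i ≤ x n ⟨i, Nat.lt_succ_of_le h⟩ := by
  intro i
  induction i with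
  | zero => intro n h; exact Nat.zero_le _
  | succ i ih =>
    intro n h
    obtain ⟨n, rfl⟩ : ∃ m, n = m + 1 := ⟨n - 1, by omega⟩
    have hi : i ≤ n := by omega
    have h2 := (hint n ⟨i, Nat.lt_succ_of_le hi⟩).2
    simp only [Fin.succ_mk] at h2
    exact Nat.lt_of_le_of_lt (ih n hi) h2

lemma colSet_finite (hstar : IAStarProp x) {i n : ℕ} (hin : i ≤ n) :
    (colSet x i n).Finite := by
  obtain ⟨J, hJ⟩ := hstar i
  apply Set.Finite.subset (Set.finite_Iio J)
  intro k hk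
  by_contra hnk
  have hJk : J ≤ i + k := by simp [Set.mem_Iio] at hnk; omega
  have := hJ (i + k) (Nat.le_add_right i k) hJk
  simp only [colSet, Set.mem_setOf_eq, this] at hk
  omega

/-- The column set is a finite lower set, hence an initial segment. -/
lemma colSet_eq_Iio (hint : InterlacingProp x) (hstar : IAStarProp x) {i n : ℕ} (hin : i ≤ n) :
    colSet x i n = Set.Iio (colSet x i n).ncard := by
  apply lowerSet_eq_Iio _ (colSet_finite x hstar hin)
  intro m hm k hkm
  have := col_anti x hint (Nat.le_add_right i k) (by omega : i + k ≤ i + m)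
  simp only [colSet, Set.mem_setOf_eq] at *
  omega

lemma heightMap_eq (i n : ℕ) (h : i ≤ n) :
    heightMap x n ⟨i, Nat.lt_succ_of_le h⟩ = (colSet x i n).ncard + i := by
  unfold heightMap
  congr 1
  have : {m : ℕ | ∃ h : i ≤ m, n < x m ⟨i, Nat.lt_succ_of_le h⟩}
      = (fun k => i + k) '' colSet x i n := by
    ext m
    simp only [Set.mem_setOf_eq, Set.mem_image, colSet]
    constructor
    · rintro ⟨him, hlt⟩
      exact ⟨m - i, by convert hlt using 3 <;> omega, by omega⟩
    · rintro ⟨k, hk, rfl⟩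
      exact ⟨Nat.le_add_right i k, hk⟩
  rw [this, Set.ncard_image_of_injective _ (fun a b => by omega)]

/-- The key duality: `x_i^{(m)} > n ↔ m - i < h_i(n)`, i.e. conjugation symmetry. -/
lemma master2 (hint : InterlacingProp x) (hstar : IAStarProp x) {i n m : ℕ}
    (hin : i ≤ n) (him : i ≤ m) :
    n < x m ⟨i, Nat.lt_succ_of_le him⟩ ↔ m - i < (colSet x i n).ncard := by
  obtain ⟨k, rfl⟩ := Nat.exists_eq_add_of_le him
  have h := Set.ext_iff.mp (colSet_eq_Iio x hint hstar hin) k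
  simp only [colSet, Set.mem_setOf_eq, Set.mem_Iio] at h
  simpa [Nat.add_sub_cancel_left, colSet] using h

end Stmt14Aux

open Stmt14Aux in
/-- `Hgt` maps `IA*` to `IA*` and is an involution on `IA*`. -/
theorem stmt14 (x : (n : ℕ) → Fin (n + 1) → ℕ)
    (hint : InterlacingProp x) (hstar : IAStarProp x) :
    InterlacingProp (heightMap x) ∧ IAStarProp (heightMap x) ∧ heightMap (heightMap x) = x := by
  refine ⟨?_, ?_, ?_⟩
  · -- InterlacingProp (heightMap x)
    intro n i
    obtain ⟨iv, hlt⟩ := i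
    have hin : iv ≤ n := by omega
    constructor
    · simp only [Fin.castSucc_mk]
      rw [heightMap_eq x iv (n + 1) (by omega), heightMap_eq x iv n hin]
      have hsub : colSet x iv (n + 1) ⊆ colSet x iv n := by
        intro k hk
        simp only [colSet, Set.mem_setOf_eq] at *
        omega
      exact Nat.add_le_add_right
        (Set.ncard_le_ncard hsub (colSet_finite x hstar hin)) iv
    · simp only [Fin.succ_mk]
      rw [heightMap_eq x iv n hin, heightMap_eq x (iv + 1) (n + 1) (by omega)]
      have hsub : colSet x iv n ⊆ colSet x (iv + 1) (n + 1) := by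
        intro k hk
        simp only [colSet, Set.mem_setOf_eq] at *
        have h2 := (hint (iv + k) ⟨iv, Nat.lt_succ_of_le (Nat.le_add_right iv k)⟩).2
        simp only [Fin.succ_mk] at h2
        rw [x_eq x (show iv + 1 + k = iv + k + 1 by omega)
          (p' := Nat.lt_succ_of_le (by omega))]
        exact Nat.lt_of_le_of_lt hk h2
      have := Set.ncard_le_ncard hsub (colSet_finite x hstar (by omega : iv + 1 ≤ n + 1))
      omega
  · -- IAStarProp (heightMap x)
    intro i
    refine ⟨x i ⟨i, Nat.lt_succ_self i⟩, fun n hin hJn => ?_⟩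
    rw [heightMap_eq x i n hin]
    have : colSet x i n = ∅ := by
      ext k
      simp only [colSet, Set.mem_setOf_eq, Set.mem_empty_iff_false, iff_false, not_lt]
      exact (col_anti x hint le_rfl (Nat.le_add_right i k)).trans hJn
    simp [this]
  · -- involution
    funext n i
    obtain ⟨iv, hlt⟩ := i
    have hin : iv ≤ n := by omega
    have hge : iv ≤ x n ⟨iv, Nat.lt_succ_of_le hin⟩ := col_ge x hint iv n hin
    rw [heightMap_eq (heightMap x) iv n hin]
    have hT : colSet (heightMap x) iv n = Set.Iio (x n ⟨iv, Nat.lt_succ_of_le hin⟩ - iv) := by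
      ext k
      simp only [colSet, Set.mem_setOf_eq, Set.mem_Iio]
      rw [heightMap_eq x iv (iv + k) (Nat.le_add_right iv k)]
      have hm := master2 x hint hstar (Nat.le_add_right iv k) hin
      omega
    rw [hT, ncard_Iio]
    omega
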